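/- Let a < b be reals and u_a, u_b, v ∈ ℝ. Let u, w : ℝ → ℝ be twice differentiable functions with u''(x) = w''(x) for all x ∈ [a,b], u(a) = u_a, u'(a) = v, w(a) = u_a, and w(b) = u_b. Then w'(a) = v − (u(b) − u_b)/(b − a). (This is the iteration formula of the shooting by Picard method: the initial slope of the Picard projection trajectory w of the shooting trajectory u corrects the initial condition v by (u(b) − u_b)/(b − a).) -/

import Mathlib

/-- Shooting by Picard method: the initial slope of the Picard projection
trajectory `w` of the shooting trajectory `u` is `v - (u(b) - u_b)/(b-a)`. -/
theorem shooting_by_picard (a b : ℝ) (hab : a < b) (ua ub v : ℝ) (u w : ℝ → ℝ)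
    (hu : Differentiable ℝ u) (hu' : Differentiable ℝ (deriv u))
    (hw : Differentiable ℝ w) (hw' : Differentiable ℝ (deriv w))
    (heq : ∀ x ∈ Set.Icc a b, deriv (deriv u) x = deriv (deriv w) x)
    (hua : u a = ua) (huv : deriv u a = v)
    (hwa : w a = ua) (hwb : w b = ub) :
    deriv w a = v - (u b - ub) / (b - a) := by
  set g : ℝ → ℝ := fun x => u x - w x with hg
  have hgd : Differentiable ℝ g := hu.sub hw
  have hgderiv : deriv g = fun x => deriv u x - deriv w x := by
    funext x; exact deriv_sub (hu x) (hw x)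
  have hgd' : Differentiable ℝ (deriv g) := by
    rw [hgderiv]; exact hu'.sub hw'
  have hgdd : ∀ x ∈ Set.Icc a b, deriv (deriv g) x = 0 := by
    intro x hx
    rw [hgderiv, deriv_fun_sub (hu' x) (hw' x), heq x hx, sub_self]
  -- MVT for g on [a,b]
  obtain ⟨c, hc, hcval⟩ := exists_deriv_eq_slope g hab hgd.continuous.continuousOn
    (fun x _ => (hgd x).differentiableWithinAt)
  -- MVT for deriv g on [a,c]
  have hac : a < c := hc.1
  obtain ⟨d, hd, hdval⟩ := exists_deriv_eq_slope (deriv g) hac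
    hgd'.continuous.continuousOn (fun x _ => (hgd' x).differentiableWithinAt)
  have hdmem : d ∈ Set.Icc a b :=
    ⟨le_of_lt hd.1, le_of_lt (lt_of_lt_of_le hd.2 (le_of_lt hc.2))⟩
  have h0 : deriv g c = deriv g a := by
    have := hgdd d hdmem
    rw [hdval] at this
    have := (div_eq_zero_iff.mp this).resolve_right (by
      intro h; exact (sub_ne_zero.mpr (ne_of_gt hac)) h)
    linarith [sub_eq_zero.mp this]
  have hga : g a = 0 := by simp [hg, hua, hwa]
  have hgb : g b = u b - ub := by simp [hg, hwb]
  have hderiva : deriv g a = deriv u a - deriv w a := by rw [hgderiv]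
  rw [h0, hga, hgb, hderiva, huv] at hcval
  have : v - deriv w a = (u b - ub) / (b - a) := by
    rw [hcval]; ring_nf
  linarith
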